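/- Let C be the cluster category of a hereditary algebra H, T a tilting object in C, Γ = End_C(T)^op, and G = Hom_C(T, −). Then the induced functor Ḡ : C/add(τT) → mod Γ is an equivalence of categories, where C/add(τT) is the factor category of C by the ideal of morphisms factoring through add(τT). -/

import Mathlib

set_option linter.unusedSectionVars false


open CategoryTheory Limits Pretriangulated Opposite

universe v u

/-- `X ∈ add T`: `X` is a direct summand of a finite direct sum of copies of `T`. -/
def memAddC {C : Type u} [Category.{v} C] [Preadditive C] [HasFiniteBiproducts C]
    (T X : C) : Prop :=
  ∃ (n : ℕ) (i : X ⟶ ⨁ (fun _ : Fin n => T)) (p : ⨁ (fun _ : Fin n => T) ⟶ X),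
    i ≫ p = 𝟙 X

/-- `T` is a tilting object: `Hom_C(T, X[1]) = 0` if and only if `X ∈ add T`. -/
def IsTiltingObject {C : Type u} [Category.{v} C] [Preadditive C] [HasFiniteBiproducts C]
    [HasShift C ℤ] (T : C) : Prop :=
  ∀ X : C, (∀ f : T ⟶ X⟦(1 : ℤ)⟧, f = 0) ↔ memAddC T X

/-- A morphism factors through an object of `add N`. -/
def factorsThroughAdd {C : Type u} [Category.{v} C] [Preadditive C] [HasFiniteBiproducts C]
    (N : C) {X Y : C} (f : X ⟶ Y) : Prop :=
  ∃ (Z : C) (_ : memAddC N Z) (g : X ⟶ Z) (h : Z ⟶ Y), g ≫ h = f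

/-- The hom-relation defining the factor category `C/add N`: two morphisms are identified if
their difference factors through an object of `add N`. -/
def addQuotRel {C : Type u} [Category.{v} C] [Preadditive C] [HasFiniteBiproducts C]
    (N : C) : HomRel C :=
  fun {X Y : C} (f g : X ⟶ Y) => factorsThroughAdd N (f - g)

/-- The ring map `End X → (End (unop X))ᵐᵒᵖ`, `r ↦ op r.unop`. -/
def endOpToMopEnd {C : Type u} [Category.{v} C] [Preadditive C] (X : Cᵒᵖ) :
    End X →+* (End (unop X))ᵐᵒᵖ where
  toFun r := MulOpposite.op r.unop
  map_one' := rfl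
  map_mul' _ _ := rfl
  map_zero' := rfl
  map_add' _ _ := rfl

/-- The old `preadditiveCoyonedaObj` (for `X : Cᵒᵖ`, valued in `End X`-modules,
with `r • f = r.unop ≫ f`). -/
noncomputable def preadditiveCoyonedaObjOp {C : Type u} [Category.{v} C] [Preadditive C] (X : Cᵒᵖ) :
    C ⥤ ModuleCat.{v} (End X) :=
  preadditiveCoyonedaObj (unop X) ⋙ ModuleCat.restrictScalars (endOpToMopEnd X)


namespace St12

variable {C : Type u} [Category.{v} C] [Preadditive C] [HasFiniteBiproducts C]

/-- finite direct sum of copies of `T` -/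
noncomputable abbrev BP (T : C) (n : ℕ) : C := ⨁ (fun _ : Fin n => T)

lemma memAdd_biproduct (T : C) (n : ℕ) : memAddC T (BP T n) :=
  ⟨n, 𝟙 _, 𝟙 _, Category.id_comp _⟩

lemma memAdd_self (T : C) : memAddC T T :=
  ⟨1, biproduct.ι (fun _ : Fin 1 => T) 0, biproduct.π (fun _ : Fin 1 => T) 0, by simp⟩

lemma memAdd_of_iso {N X X' : C} (h : memAddC N X) (e : X ≅ X') : memAddC N X' := by
  obtain ⟨n, i, p, hip⟩ := h
  refine ⟨n, e.inv ≫ i, p ≫ e.hom, ?_⟩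
  rw [Category.assoc, ← Category.assoc i, hip, Category.id_comp, e.inv_hom_id]

lemma memAdd_iso_left {N N' X : C} (h : memAddC N X) (e : N ≅ N') : memAddC N' X := by
  obtain ⟨n, i, p, hip⟩ := h
  refine ⟨n, i ≫ (biproduct.mapIso (fun _ : Fin n => e)).hom,
    (biproduct.mapIso (fun _ : Fin n => e)).inv ≫ p, ?_⟩
  rw [Category.assoc, Iso.hom_inv_id_assoc, hip]

lemma memAdd_map {N X : C} (F : C ⥤ C) [F.Additive] (h : memAddC N X) :
    memAddC (F.obj N) (F.obj X) := by
  obtain ⟨n, i, p, hip⟩ := h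
  refine ⟨n, F.map i ≫ (F.mapBiproduct (fun _ : Fin n => N)).hom,
    (F.mapBiproduct (fun _ : Fin n => N)).inv ≫ F.map p, ?_⟩
  rw [Category.assoc, Iso.hom_inv_id_assoc, ← F.map_comp, hip, F.map_id]

lemma zero_into_add {N Z T' : C} (hN : ∀ f : T' ⟶ N, f = 0) (hZ : memAddC N Z)
    (f : T' ⟶ Z) : f = 0 := by
  obtain ⟨n, i, p, hip⟩ := hZ
  have h1 : f ≫ i = 0 := biproduct.hom_ext _ _ (fun j => by
    rw [Category.assoc, hN (f ≫ i ≫ biproduct.π _ j), zero_comp])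
  calc f = f ≫ i ≫ p := by rw [hip, Category.comp_id]
    _ = (f ≫ i) ≫ p := by rw [Category.assoc]
    _ = 0 := by rw [h1, zero_comp]

lemma zero_out_add {T W Y : C} (hW : memAddC T W) (m : W ⟶ Y)
    (h : ∀ t : T ⟶ W, t ≫ m = 0) : m = 0 := by
  obtain ⟨n, i, p, hip⟩ := hW
  have h1 : p ≫ m = 0 := biproduct.hom_ext' _ _ (fun j => by
    rw [comp_zero, ← Category.assoc]; exact h _)
  calc m = (i ≫ p) ≫ m := by rw [hip, Category.id_comp]
    _ = i ≫ p ≫ m := by rw [Category.assoc]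
    _ = 0 := by rw [h1, comp_zero]

section Mod

variable (T : C)

/-- `Hom(T, X)` as a module over `Γ = End (op T)` (local instance to help unification). -/
instance homModuleEnd {X : C} : Module (End (op T)) (T ⟶ X) :=
  Module.compHom (T ⟶ X) (endOpToMopEnd (op T))

/-- View an endomorphism of `T` as an element of `Γ = End (op T)`. -/
def toE (a : T ⟶ T) : End (op T) := a.op

lemma endSmul_def {X : C} (r : End (op T)) (f : T ⟶ X) : r • f = r.unop ≫ f := rfl

lemma toE_smul {X : C} (a : T ⟶ T) (f : T ⟶ X) : toE T a • f = a ≫ f := rfl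

lemma mul_toE (r : End (op T)) (a : T ⟶ T) : r * toE T a = toE T (r.unop ≫ a) := rfl

lemma toE_one : toE T (𝟙 T) = 1 := rfl

lemma toE_zero : toE T (0 : T ⟶ T) = 0 := op_zero _ _

lemma decompGamma {n : ℕ} (x : T ⟶ BP T n) :
    x = ∑ j : Fin n, toE T (x ≫ biproduct.π (fun _ : Fin n => T) j) •
      biproduct.ι (fun _ : Fin n => T) j := by
  calc x = x ≫ 𝟙 (BP T n) := (Category.comp_id x).symm
    _ = x ≫ ∑ j : Fin n, biproduct.π (fun _ : Fin n => T) j ≫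
        biproduct.ι (fun _ : Fin n => T) j := by rw [biproduct.total]
    _ = ∑ j : Fin n, x ≫ biproduct.π (fun _ : Fin n => T) j ≫
        biproduct.ι (fun _ : Fin n => T) j := by rw [Preadditive.comp_sum]
    _ = _ := Finset.sum_congr rfl (fun j _ => by
        rw [toE_smul, Category.assoc])

/-- postcomposition as a `Γ = End (op T)`-linear map -/
def homComp {A B : C} (g : A ⟶ B) : (T ⟶ A) →ₗ[End (op T)] (T ⟶ B) where
  toFun x := x ≫ g
  map_add' _ _ := Preadditive.add_comp _ _ _ _ _ _
  map_smul' r x := by dsimp; rw [endSmul_def, endSmul_def, Category.assoc]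

@[simp] lemma homComp_apply {A B : C} (g : A ⟶ B) (x : T ⟶ A) : homComp T g x = x ≫ g := rfl

/-- Yoneda-type lemma: every `Γ`-linear map out of `Hom(T, T^n)` is induced by a morphism. -/
lemma exists_hom_of_linearMap {X : C} {n : ℕ}
    (φ : (T ⟶ BP T n) →ₗ[End (op T)] (T ⟶ X)) :
    ∃ u : BP T n ⟶ X, ∀ x : T ⟶ BP T n, x ≫ u = φ x := by
  refine ⟨biproduct.desc (fun j => φ (biproduct.ι (fun _ : Fin n => T) j)), fun x => ?_⟩
  conv_lhs => rw [decompGamma T x]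
  rw [Preadditive.sum_comp]
  conv_rhs => rw [decompGamma T x, map_sum]
  refine Finset.sum_congr rfl (fun j _ => ?_)
  rw [map_smul, toE_smul, toE_smul, Category.assoc, biproduct.ι_desc]

end Mod


end St12



namespace St12

section Span

variable {C : Type u} [Category.{v} C] [Preadditive C] [HasFiniteBiproducts C]
variable (k : Type v) [Field k] [Linear k C] (T : C)

lemma mem_span_Gamma {X : C} (S : Set (T ⟶ X)) {x : T ⟶ X}
    (hx : x ∈ Submodule.span k S) : x ∈ Submodule.span (End (op T)) S := by
  induction hx using Submodule.span_induction with
  | mem y hy => exact Submodule.subset_span hy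
  | zero => exact Submodule.zero_mem _
  | add y z _ _ hy' hz' => exact Submodule.add_mem _ hy' hz'
  | smul c y _ hy' =>
      have h : toE T (c • 𝟙 T) • y = c • y := by
        rw [toE_smul, Linear.smul_comp, Category.id_comp]
      rw [← h]
      exact Submodule.smul_mem _ _ hy'

lemma module_finite_hom (X : C) [FiniteDimensional k (T ⟶ X)] :
    Module.Finite (End (op T)) (T ⟶ X) := by
  classical
  obtain ⟨n, s, hs⟩ := Module.Finite.exists_fin (R := k) (M := (T ⟶ X))
  refine ⟨⟨(Finset.univ.image s), ?_⟩⟩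
  rw [eq_top_iff]
  intro x _
  have hx : x ∈ Submodule.span k (Set.range s) := by rw [hs]; trivial
  have := mem_span_Gamma k T (Set.range s) hx
  simpa [Finset.coe_image] using this

end Span

section Tri

variable {C : Type u} [Category.{v} C] [Preadditive C] [HasZeroObject C]
    [HasShift C ℤ] [∀ n : ℤ, (shiftFunctor C n).Additive] [Pretriangulated C]
    [HasFiniteBiproducts C]
    (k : Type v) [Field k] [Linear k C]

/-- Existence of the approximation triangle `T₁ → T₀ → X → T₁[1]` with `T₀, T₁ ∈ add T`. -/
lemma approx (hfin : ∀ X Y : C, FiniteDimensional k (X ⟶ Y))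
    (T : C) (hT : IsTiltingObject T) (X : C) :
    ∃ (n : ℕ) (Z : C) (g : BP T n ⟶ X) (u : X ⟶ Z) (v : Z ⟶ (BP T n)⟦(1:ℤ)⟧),
      (Triangle.mk g u v ∈ distTriang C) ∧
      (∀ f : T ⟶ X, ∃ x : T ⟶ BP T n, x ≫ g = f) ∧
      (∀ f : T ⟶ Z, f = 0) ∧
      memAddC T (Z⟦(-1:ℤ)⟧) := by
  haveI := hfin T X
  obtain ⟨n, s, hs⟩ := Module.Finite.exists_fin (R := k) (M := (T ⟶ X))
  set g : BP T n ⟶ X := biproduct.desc s with hg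
  have hsurj : ∀ f : T ⟶ X, ∃ x : T ⟶ BP T n, x ≫ g = f := by
    intro f
    have hf : f ∈ Submodule.span k (Set.range s) := by rw [hs]; trivial
    obtain ⟨c, hc⟩ := (Submodule.mem_span_range_iff_exists_fun k).1 hf
    refine ⟨∑ i, c i • biproduct.ι (fun _ : Fin n => T) i, ?_⟩
    rw [Preadditive.sum_comp]
    rw [← hc]
    refine Finset.sum_congr rfl (fun i _ => ?_)
    rw [Linear.smul_comp, biproduct.ι_desc]
  obtain ⟨Z, u, v, hΔ⟩ := distinguished_cocone_triangle g
  have hZzero : ∀ f : T ⟶ Z, f = 0 := by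
    intro f
    have hv : f ≫ v = 0 := (hT (BP T n)).mpr (memAdd_biproduct T n) (f ≫ v)
    obtain ⟨ψ, hψ⟩ := Triangle.coyoneda_exact₃ _ hΔ f hv
    obtain ⟨x, hx⟩ := hsurj ψ
    rw [hψ, ← hx]; show (x ≫ g) ≫ u = 0; rw [Category.assoc]
    have h12 : g ≫ u = 0 := comp_distTriang_mor_zero₁₂ _ hΔ
    rw [h12, comp_zero]
  have hZneg : memAddC T (Z⟦(-1:ℤ)⟧) := by
    refine (hT (Z⟦(-1:ℤ)⟧)).mp ?_
    intro h
    have e : (Z⟦(-1:ℤ)⟧)⟦(1:ℤ)⟧ ≅ Z := (shiftEquiv C (1:ℤ)).counitIso.app Z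
    have h0 : h ≫ e.hom = 0 := hZzero _
    have h2 : h = h ≫ e.hom ≫ e.inv := by
      rw [e.hom_inv_id]; exact (Category.comp_id h).symm
    rw [h2, ← Category.assoc, h0, zero_comp]
  exact ⟨n, Z, g, u, v, hΔ, hsurj, hZzero, hZneg⟩

/-- The faithfulness core: a morphism killed by `Hom(T,-)` factors through `add (τ T)`. -/
lemma factors_core (hfin : ∀ X Y : C, FiniteDimensional k (X ⟶ Y))
    (τ : C ⥤ C) [τ.Additive] (hτ : τ ≅ shiftFunctor C (1 : ℤ))
    (T : C) (hT : IsTiltingObject T) {X Y : C} (f : X ⟶ Y)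
    (hf : ∀ x : T ⟶ X, x ≫ f = 0) : factorsThroughAdd (τ.obj T) f := by
  obtain ⟨n, Z, g, u, v, hΔ, hsurj, hZzero, hZneg⟩ := approx k hfin T hT X
  have hgf : g ≫ f = 0 := by
    refine zero_out_add (memAdd_biproduct T n) (g ≫ f) (fun t => ?_)
    rw [← Category.assoc]; exact hf _
  obtain ⟨f', hf'⟩ := Triangle.yoneda_exact₂ _ hΔ f hgf
  have hτT : memAddC (τ.obj T) Z := by
    have h2 := memAdd_map (shiftFunctor C (1:ℤ)) hZneg
    have h3 := memAdd_of_iso h2 ((shiftEquiv C (1:ℤ)).counitIso.app Z)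
    exact memAdd_iso_left h3 (hτ.app T).symm
  exact ⟨Z, hτT, u, f', hf'.symm⟩

/-- The fullness core. -/
lemma full_core (hfin : ∀ X Y : C, FiniteDimensional k (X ⟶ Y))
    (T : C) (hT : IsTiltingObject T) {X Y : C}
    (φ : (T ⟶ X) →ₗ[End (op T)] (T ⟶ Y)) :
    ∃ f : X ⟶ Y, ∀ x : T ⟶ X, x ≫ f = φ x := by
  obtain ⟨n, Z, g, u, v, hΔ, hsurj, hZzero, hZneg⟩ := approx k hfin T hT X
  obtain ⟨w, hw⟩ := exists_hom_of_linearMap T (φ.comp (homComp T g))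
  have hw' : ∀ x : T ⟶ BP T n, x ≫ w = φ (x ≫ g) := fun x => hw x
  set Δ' := (Triangle.mk g u v).invRotate with hΔ'def
  have hΔ' : Δ' ∈ distTriang C := inv_rot_of_distTriang _ hΔ
  have hmor₂ : Δ'.mor₂ = g := rfl
  have h12 : Δ'.mor₁ ≫ Δ'.mor₂ = 0 := comp_distTriang_mor_zero₁₂ _ hΔ'
  have h0 : Δ'.mor₁ ≫ w = 0 := by
    refine zero_out_add (W := Δ'.obj₁) hZneg (Δ'.mor₁ ≫ w) (fun t => ?_)
    refine (Category.assoc t Δ'.mor₁ w).symm.trans ((hw' (t ≫ Δ'.mor₁)).trans ?_)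
    have : (t ≫ Δ'.mor₁) ≫ g = 0 := by
      exact (Category.assoc t Δ'.mor₁ g).trans ((congrArg (t ≫ ·) h12).trans comp_zero)
    exact (congrArg φ this).trans (map_zero φ)
  obtain ⟨f, hf⟩ : ∃ f : X ⟶ Y, w = g ≫ f := Triangle.yoneda_exact₂ _ hΔ' w h0
  refine ⟨f, fun x => ?_⟩
  obtain ⟨x', hx'⟩ := hsurj x
  have hgf : g ≫ f = w := by rw [hf]
  rw [← hx', Category.assoc, hgf, hw' x', hx']

/-- The density core. -/
lemma dense_core (hfin : ∀ X Y : C, FiniteDimensional k (X ⟶ Y))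
    (T : C) (hT : IsTiltingObject T) (M : ModuleCat.{v} (End (op T)))
    (hM : Module.Finite (End (op T)) M) :
    ∃ A : C, Nonempty (ModuleCat.of (End (op T)) (T ⟶ A) ≅ M) := by
  classical
  haveI := hM
  obtain ⟨n, y, hy⟩ := Module.Finite.exists_fin (R := End (op T)) (M := M)
  -- the surjection ρ : Hom(T, T^n) → M
  set ρ : (T ⟶ BP T n) →ₗ[End (op T)] M :=
    { toFun := fun x => ∑ j, toE T (x ≫ biproduct.π (fun _ : Fin n => T) j) • y j
      map_add' := by
        intro x x'
        rw [← Finset.sum_add_distrib]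
        refine Finset.sum_congr rfl (fun j _ => ?_)
        rw [Preadditive.add_comp]
        show toE T (_ + _) • y j = _
        rw [show toE T ((x ≫ biproduct.π (fun _ : Fin n => T) j) +
          (x' ≫ biproduct.π (fun _ : Fin n => T) j)) =
          toE T (x ≫ biproduct.π (fun _ : Fin n => T) j) +
          toE T (x' ≫ biproduct.π (fun _ : Fin n => T) j) from rfl, add_smul]
      map_smul' := by
        intro r x
        dsimp only [RingHom.id_apply]
        rw [Finset.smul_sum]
        refine Finset.sum_congr rfl (fun j _ => ?_)
        rw [endSmul_def, Category.assoc, ← mul_toE, mul_smul] } with hρdef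
  have hρι : ∀ j, ρ (biproduct.ι (fun _ : Fin n => T) j) = y j := by
    intro j
    show (∑ i, toE T (biproduct.ι (fun _ : Fin n => T) j ≫
      biproduct.π (fun _ : Fin n => T) i) • y i) = y j
    rw [Finset.sum_eq_single j]
    · rw [biproduct.ι_π_self]
      rw [toE_one]
      exact one_smul _ _
    · intro i _ hij
      rw [biproduct.ι_π_ne _ (Ne.symm hij), toE_zero]; exact zero_smul (End (op T)) (y i)
    · intro h; exact absurd (Finset.mem_univ j) h
  have hρsurj : Function.Surjective ρ := by
    intro m
    have hm : m ∈ Submodule.span (End (op T)) (Set.range y) := by rw [hy]; trivial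
    obtain ⟨c, hc⟩ := (Submodule.mem_span_range_iff_exists_fun (End (op T))).1 hm
    refine ⟨∑ j, c j • biproduct.ι (fun _ : Fin n => T) j, ?_⟩
    rw [map_sum]
    rw [← hc]
    refine Finset.sum_congr rfl (fun j _ => ?_)
    rw [map_smul, hρι]
  -- the kernel and its finite generation
  set K : Submodule (End (op T)) (T ⟶ BP T n) := LinearMap.ker ρ with hKdef
  haveI := hfin T (BP T n)
  set K' : Submodule k (T ⟶ BP T n) :=
    { carrier := (K : Set (T ⟶ BP T n))
      add_mem' := fun hx hy => K.add_mem hx hy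
      zero_mem' := K.zero_mem
      smul_mem' := by
        intro c x hx
        have h : toE T (c • 𝟙 T) • x = c • x := by
          rw [toE_smul, Linear.smul_comp, Category.id_comp]
        show c • x ∈ K
        rw [← h]
        exact K.smul_mem _ hx } with hK'def
  obtain ⟨m, s', hs'⟩ := Module.Finite.exists_fin (R := k) (M := K')
  set κ : Fin m → (T ⟶ BP T n) := fun i => (s' i : T ⟶ BP T n) with hκdef
  have hκK : ∀ i, κ i ∈ K := fun i => (s' i).2
  have hKspan : ∀ x ∈ K, x ∈ Submodule.span (End (op T)) (Set.range κ) := by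
    intro x hx
    have h1 : (⟨x, hx⟩ : K') ∈ Submodule.span k (Set.range s') := by rw [hs']; trivial
    have h2 : x ∈ Submodule.map K'.subtype (Submodule.span k (Set.range s')) :=
      ⟨⟨x, hx⟩, h1, rfl⟩
    rw [Submodule.map_span] at h2
    have h3 : K'.subtype '' Set.range s' = Set.range κ := by
      rw [← Set.range_comp]; rfl
    rw [h3] at h2
    exact mem_span_Gamma k T (Set.range κ) h2
  -- the presentation morphism α and its cone
  set α : BP T m ⟶ BP T n := biproduct.desc κ with hαdef
  have hrange : ∀ x : T ⟶ BP T m, x ≫ α ∈ K := by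
    intro x
    have hxα : x ≫ α = ∑ j, toE T (x ≫ biproduct.π (fun _ : Fin m => T) j) • κ j := by
      conv_lhs => rw [decompGamma T x]
      rw [Preadditive.sum_comp]
      refine Finset.sum_congr rfl (fun j _ => ?_)
      rw [endSmul_def, endSmul_def, Category.assoc, biproduct.ι_desc]
    rw [hxα]
    exact Submodule.sum_mem _ (fun j _ => K.smul_mem _ (hκK j))
  obtain ⟨A, g', v', hΔ⟩ := distinguished_cocone_triangle α
  have hsurj' : ∀ f : T ⟶ A, ∃ x : T ⟶ BP T n, x ≫ g' = f := by
    intro f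
    have hv : f ≫ v' = 0 := (hT (BP T m)).mpr (memAdd_biproduct T m) (f ≫ v')
    obtain ⟨x, hx⟩ := Triangle.coyoneda_exact₃ _ hΔ f hv
    exact ⟨x, hx.symm⟩
  have h12 : α ≫ g' = 0 := comp_distTriang_mor_zero₁₂ _ hΔ
  have hker : ∀ x : T ⟶ BP T n, x ≫ g' = 0 ↔ x ∈ K := by
    intro x
    constructor
    · intro hx
      obtain ⟨h', hh'⟩ := Triangle.coyoneda_exact₂ _ hΔ x hx
      rw [hh']
      exact hrange h'
    · intro hx
      have hx' := hKspan x hx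
      obtain ⟨c, hc⟩ := (Submodule.mem_span_range_iff_exists_fun (End (op T))).1 hx'
      rw [← hc, Preadditive.sum_comp]
      refine Finset.sum_eq_zero (fun j _ => ?_)
      have hκg : κ j ≫ g' = 0 := by
        have : κ j = biproduct.ι (fun _ : Fin m => T) j ≫ α := (biproduct.ι_desc _ _).symm
        rw [this, Category.assoc, h12, comp_zero]
      rw [endSmul_def, Category.assoc, hκg, comp_zero]
  -- now build the isomorphism
  set Lg : (T ⟶ BP T n) →ₗ[End (op T)] (T ⟶ A) := homComp T g' with hLgdef
  have hLsurj : Function.Surjective Lg := fun f => hsurj' f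
  have hLker : LinearMap.ker Lg = K := by
    ext x
    exact hker x
  have e : (T ⟶ A) ≃ₗ[End (op T)] M :=
    (Lg.quotKerEquivOfSurjective hLsurj).symm.trans
      ((Submodule.quotEquivOfEq _ _ (by rw [hLker, hKdef])).trans
        (ρ.quotKerEquivOfSurjective hρsurj))
  exact ⟨A, ⟨e.toModuleIso⟩⟩

end Tri

end St12


/-- **Theorem A.**  Let `C` be the cluster category of a hereditary algebra, `T` a tilting
object, `Γ = End_C(T)ᵒᵖ` and `G = Hom_C(T,−)`.  Then the induced functor
`Gbar : C/add(τT) → mod Γ` is an equivalence of categories: there is a functor `Gbar` on the factor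
category `C/add(τT)` compatible with `G`, which is full, faithful, takes values in finitely
generated `Γ`-modules, and hits every finitely generated `Γ`-module up to isomorphism. -/
theorem stmt12 {C : Type u} [Category.{v} C] [Preadditive C] [HasZeroObject C]
    [HasShift C ℤ] [∀ n : ℤ, (shiftFunctor C n).Additive] [Pretriangulated C]
    [HasFiniteBiproducts C]
    (k : Type v) [Field k] [Linear k C]
    (hfin : ∀ X Y : C, FiniteDimensional k (X ⟶ Y))
    (τ : C ⥤ C) [τ.Additive] [τ.IsEquivalence] (hτ : τ ≅ shiftFunctor C (1 : ℤ))
    (T : C) (hT : IsTiltingObject T)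
    (G : C ⥤ ModuleCat.{v} (End (op T))) (hG : G = preadditiveCoyonedaObjOp (op T)) :
    ∃ Gbar : Quotient (addQuotRel (τ.obj T)) ⥤ ModuleCat.{v} (End (op T)),
      Nonempty ((Quotient.functor (addQuotRel (τ.obj T)) ⋙ Gbar) ≅ G) ∧
      Gbar.Full ∧ Gbar.Faithful ∧
      (∀ A, Module.Finite (End (op T)) (Gbar.obj A)) ∧
      (∀ Y : ModuleCat.{v} (End (op T)), Module.Finite (End (op T)) Y →
        ∃ A, Nonempty (Gbar.obj A ≅ Y)) := by
  subst hG
  have hτzero : ∀ q : T ⟶ τ.obj T, q = 0 := by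
    intro q
    have h1 : q ≫ (hτ.app T).hom = 0 := (hT T).mpr (St12.memAdd_self T) _
    calc q = (q ≫ (hτ.app T).hom) ≫ (hτ.app T).inv := by
            rw [Category.assoc, Iso.hom_inv_id, Category.comp_id]
      _ = 0 := by rw [h1, zero_comp]
  have Hrel : ∀ (x y : C) (f₁ f₂ : x ⟶ y), addQuotRel (τ.obj T) f₁ f₂ →
      (preadditiveCoyonedaObjOp (op T)).map f₁ = (preadditiveCoyonedaObjOp (op T)).map f₂ := by
    intro x y f₁ f₂ hrel
    obtain ⟨Z, hZ, a, b, hab⟩ := hrel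
    refine ModuleCat.hom_ext (LinearMap.ext (fun (t : T ⟶ x) => ?_))
    show t ≫ f₁ = t ≫ f₂
    have h1 : t ≫ a = 0 := St12.zero_into_add hτzero hZ (t ≫ a)
    have h2 : t ≫ (f₁ - f₂) = 0 := by
      rw [← hab, ← Category.assoc, h1, zero_comp]
    rw [Preadditive.comp_sub] at h2
    exact sub_eq_zero.mp h2
  refine ⟨CategoryTheory.Quotient.lift _ _ Hrel, ⟨CategoryTheory.Quotient.lift.isLift _ _ Hrel⟩, ?_, ?_, ?_, ?_⟩
  · -- Full
    refine ⟨fun {A B} φ => ?_⟩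
    obtain ⟨f, hf⟩ := St12.full_core k hfin T hT (X := A.as) (Y := B.as) φ.hom
    exact ⟨(CategoryTheory.Quotient.functor _).map f, ModuleCat.hom_ext (LinearMap.ext (fun x => hf x))⟩
  · -- Faithful
    refine ⟨fun {A B} f₁' f₂' h => ?_⟩
    obtain ⟨f₁, hf₁⟩ := (CategoryTheory.Quotient.functor (addQuotRel (τ.obj T))).map_surjective f₁'
    obtain ⟨f₂, hf₂⟩ := (CategoryTheory.Quotient.functor (addQuotRel (τ.obj T))).map_surjective f₂'
    rw [← hf₁, ← hf₂] at h ⊢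
    have hzero : ∀ x : T ⟶ A.as, x ≫ (f₁ - f₂) = 0 := by
      intro x
      rw [Preadditive.comp_sub, sub_eq_zero]
      exact DFunLike.congr_fun (congrArg ModuleCat.Hom.hom h) x
    exact CategoryTheory.Quotient.sound _ (St12.factors_core k hfin τ hτ T hT (f₁ - f₂) hzero)
  · -- finitely generated values
    intro A
    haveI := hfin T A.as
    exact St12.module_finite_hom k T A.as
  · -- density
    intro Y hY
    obtain ⟨A, ⟨iso⟩⟩ := St12.dense_core k hfin T hT Y hY
    exact ⟨⟨A⟩, ⟨iso⟩⟩
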